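/- arXiv:1305.4027 — 2 statements merged into one kernel-verified Lean document; each statement's English description precedes it below -/
import Mathlib

section
/- For the 2-random coordinate descent method with uniform pair selection on min{f(x) + h(x) : aᵀx = b}, the expected optimality measure satisfies min_{0 ≤ l ≤ k} E[(M_2(x^l, Γ))²] ≤ N (F(x⁰) − F*) / (k + 1), where M_2(x, Γ) = ‖d_{NΓ}(x)‖_Γ and F* is the optimal value. -/
open scoped BigOperators RealInnerProductSpace
open Finset Filter

noncomputable section

/-- The ambient space `ℝ^n` with the Euclidean norm. -/
abbrev En (n : ℕ) := EuclideanSpace ℝ (Fin n)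

/-- Projection onto block `i` of the block decomposition of `ℝ^n` given by the
block-index map `blk : Fin n → Fin N`; it realizes `U_i U_iᵀ y`. -/
def blockProj {n N : ℕ} (blk : Fin n → Fin N) (i : Fin N) (y : En n) : En n :=
  WithLp.toLp 2 (fun j => if blk j = i then y j else 0)

/-- The squared block norm `‖x‖_L² = ∑ i, L i ‖x_i‖²`. -/
def blockNormSq {n N : ℕ} (blk : Fin n → Fin N) (L : Fin N → ℝ) (x : En n) : ℝ :=
  ∑ i, L i * ‖blockProj blk i x‖ ^ 2

section Helpers

variable {n N : ℕ} {blk : Fin n → Fin N}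

lemma inner_en (u v : En n) : ⟪u, v⟫ = ∑ l, u l * v l := by
  simp [PiLp.inner_apply, RCLike.inner_apply]
  exact Finset.sum_congr rfl fun _ _ => mul_comm _ _

lemma sum_blockProj (blk : Fin n → Fin N) (y : En n) : ∑ i, blockProj blk i y = y := by
  ext l
  rw [WithLp.ofLp_sum, Finset.sum_apply]
  simp [blockProj]

lemma blockProj_apply (i : Fin N) (y : En n) (l : Fin n) :
    blockProj blk i y l = if blk l = i then y l else 0 := rfl

lemma blockProj_smul (i : Fin N) (c : ℝ) (y : En n) :
    blockProj blk i (c • y) = c • blockProj blk i y := by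
  ext l
  simp only [blockProj, PiLp.smul_apply, smul_eq_mul]
  split <;> simp

lemma inner_pair_support {i j : Fin N} (hij : i ≠ j) (v w : En n)
    (hw : ∀ l, blk l ≠ i → blk l ≠ j → w l = 0) :
    ⟪v, w⟫ = ⟪blockProj blk i v + blockProj blk j v, w⟫ := by
  rw [inner_en, inner_en]
  refine Finset.sum_congr rfl fun l _ => ?_
  by_cases h1 : blk l = i
  · simp [blockProj_apply, h1, hij, PiLp.add_apply]
  · by_cases h2 : blk l = j
    · simp [blockProj_apply, h1, h2, Ne.symm hij, PiLp.add_apply]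
    · simp [blockProj_apply, h1, h2, hw l h1 h2, PiLp.add_apply]

lemma inner_blockProj_orth {i j : Fin N} (hij : i ≠ j) (u v : En n) :
    ⟪blockProj blk i u, blockProj blk j v⟫ = 0 := by
  rw [inner_en]
  refine Finset.sum_eq_zero fun l _ => ?_
  by_cases h1 : blk l = i
  · simp [blockProj_apply, h1, hij]
  · simp [blockProj_apply, h1]

lemma norm_pair_sq {i j : Fin N} (hij : i ≠ j) (u v : En n) :
    ‖blockProj blk i u + blockProj blk j v‖ ^ 2
      = ‖blockProj blk i u‖ ^ 2 + ‖blockProj blk j v‖ ^ 2 := by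
  rw [norm_add_sq_real, inner_blockProj_orth hij]
  ring

lemma norm_blockProj_smul_sq (i : Fin N) (t : ℝ) (y : En n) :
    ‖blockProj blk i (t • y)‖ ^ 2 = t ^ 2 * ‖blockProj blk i y‖ ^ 2 := by
  rw [blockProj_smul, norm_smul, mul_pow, Real.norm_eq_abs, sq_abs]

/-- Descent lemma for two-block-supported directions. -/
lemma descent_lemma
    (f : En n → ℝ) (g : En n → En n) (hg : ∀ x, HasGradientAt f (g x) x)
    (L : Fin N → Fin N → ℝ)
    (hlip : ∀ (i j : Fin N), i ≠ j → ∀ (y s : En n),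
      (∀ l, blk l ≠ i → blk l ≠ j → s l = 0) →
      ‖(blockProj blk i (g (y + s)) + blockProj blk j (g (y + s))) -
        (blockProj blk i (g y) + blockProj blk j (g y))‖ ≤ L i j * ‖s‖)
    {i j : Fin N} (hij : i ≠ j) (x s : En n)
    (hs : ∀ l, blk l ≠ i → blk l ≠ j → s l = 0) :
    f (x + s) ≤ f x + ⟪g x, s⟫ + L i j / 2 * ‖s‖ ^ 2 := by
  set G : ℝ → ℝ := fun t => f (x + t • s) - t * ⟪g x, s⟫ - (L i j / 2 * ‖s‖ ^ 2) * t ^ 2 with hG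
  have hder : ∀ t : ℝ, HasDerivAt G
      (⟪g (x + t • s), s⟫ - ⟪g x, s⟫ - (L i j / 2 * ‖s‖ ^ 2) * (2 * t)) t := by
    intro t
    have hline : HasDerivAt (fun t : ℝ => x + t • s) s t := by
      simpa using ((hasDerivAt_id t).smul_const s).const_add x
    have hf : HasFDerivAt f ((InnerProductSpace.toDual ℝ (En n)) (g (x + t • s)))
        (x + t • s) := (hg _).hasFDerivAt
    have h1 : HasDerivAt (fun t : ℝ => f (x + t • s)) (⟪g (x + t • s), s⟫) t := by
      have := hf.comp_hasDerivAt t hline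
      simp [InnerProductSpace.toDual_apply_apply] at this
      exact this
    have h2 : HasDerivAt (fun t : ℝ => t * ⟪g x, s⟫) (⟪g x, s⟫) t :=
      hasDerivAt_mul_const _
    have h3 : HasDerivAt (fun t : ℝ => (L i j / 2 * ‖s‖ ^ 2) * t ^ 2)
        ((L i j / 2 * ‖s‖ ^ 2) * (2 * t)) t := by
      simpa [mul_comm] using (hasDerivAt_pow 2 t).const_mul (L i j / 2 * ‖s‖ ^ 2)
    exact (h1.sub h2).sub h3
  have hgrad_bound : ∀ t : ℝ, 0 ≤ t →
      ⟪g (x + t • s), s⟫ - ⟪g x, s⟫ ≤ L i j * t * ‖s‖ ^ 2 := by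
    intro t ht
    have hts : ∀ l, blk l ≠ i → blk l ≠ j → (t • s) l = 0 := by
      intro l h1 h2
      have : (t • s) l = t * s l := rfl
      rw [this, hs l h1 h2, mul_zero]
    have hl := hlip i j hij x (t • s) hts
    have hinner : ⟪g (x + t • s), s⟫ - ⟪g x, s⟫
        = ⟪(blockProj blk i (g (x + t • s)) + blockProj blk j (g (x + t • s))) -
            (blockProj blk i (g x) + blockProj blk j (g x)), s⟫ := by
      rw [inner_pair_support hij (g (x + t • s)) s hs,
        inner_pair_support hij (g x) s hs, ← inner_sub_left]
    rw [hinner]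
    calc _ ≤ ‖(blockProj blk i (g (x + t • s)) + blockProj blk j (g (x + t • s))) -
            (blockProj blk i (g x) + blockProj blk j (g x))‖ * ‖s‖ := real_inner_le_norm _ _
      _ ≤ (L i j * ‖t • s‖) * ‖s‖ := mul_le_mul_of_nonneg_right hl (norm_nonneg s)
      _ = L i j * t * ‖s‖ ^ 2 := by
            rw [norm_smul, Real.norm_eq_abs, abs_of_nonneg ht]; ring
  have hanti : AntitoneOn G (Set.Icc (0:ℝ) 1) := by
    apply antitoneOn_of_deriv_nonpos (convex_Icc 0 1)
    · exact Continuous.continuousOn (by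
        have : Differentiable ℝ G := fun t => (hder t).differentiableAt
        exact this.continuous)
    · intro t _
      exact (hder t).differentiableAt.differentiableWithinAt
    · intro t ht
      rw [interior_Icc] at ht
      rw [(hder t).deriv]
      have := hgrad_bound t (le_of_lt ht.1)
      nlinarith [this]
  have h01 : G 1 ≤ G 0 := hanti (Set.mem_Icc.2 ⟨le_refl 0, zero_le_one⟩)
    (Set.mem_Icc.2 ⟨zero_le_one, le_refl 1⟩) zero_le_one
  simp only [hG, one_smul, zero_smul, add_zero, one_pow, one_mul, mul_one, zero_mul,
    mul_zero, sub_zero, zero_pow] at h01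
  linarith [h01]

end Helpers

section Combinatorics

variable {N : ℕ}

lemma sym_pair_sum (B : Fin N → Fin N → ℝ) :
    ∑ p ∈ univ.filter (fun p : Fin N × Fin N => p.1 < p.2), (B p.1 p.2 + B p.2 p.1)
      = ∑ i, ∑ j, if i = j then 0 else B i j := by
  have h1 : ∑ p ∈ univ.filter (fun p : Fin N × Fin N => p.1 < p.2), (B p.1 p.2 + B p.2 p.1)
      = ∑ p : Fin N × Fin N, (if p.1 < p.2 then B p.1 p.2 + B p.2 p.1 else 0) :=
    Finset.sum_filter _ _
  have h2 : ∑ p : Fin N × Fin N, (if p.1 < p.2 then B p.2 p.1 else 0)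
      = ∑ p : Fin N × Fin N, (if p.2 < p.1 then B p.1 p.2 else 0) := by
    apply Fintype.sum_equiv (Equiv.prodComm (Fin N) (Fin N))
    intro p
    simp [Equiv.prodComm]
    congr
  have h3 : ∀ p : Fin N × Fin N,
      (if p.1 < p.2 then B p.1 p.2 else 0) + (if p.2 < p.1 then B p.1 p.2 else 0)
        = (if p.1 = p.2 then 0 else B p.1 p.2) := by
    intro p
    rcases lt_trichotomy p.1 p.2 with h | h | h
    · simp [h, ne_of_lt h, not_lt_of_gt h, asymm h]
    · simp [h, lt_irrefl]
    · simp [h, ne_of_gt h, not_lt_of_gt h, asymm h]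
  calc ∑ p ∈ univ.filter (fun p : Fin N × Fin N => p.1 < p.2), (B p.1 p.2 + B p.2 p.1)
      = ∑ p : Fin N × Fin N, ((if p.1 < p.2 then B p.1 p.2 else 0)
          + (if p.1 < p.2 then B p.2 p.1 else 0)) := by
        rw [h1]; exact Finset.sum_congr rfl fun p _ => by split <;> simp
    _ = ∑ p : Fin N × Fin N, ((if p.1 < p.2 then B p.1 p.2 else 0)
          + (if p.2 < p.1 then B p.1 p.2 else 0)) := by
        rw [Finset.sum_add_distrib, Finset.sum_add_distrib, h2]
    _ = ∑ p : Fin N × Fin N, (if p.1 = p.2 then 0 else B p.1 p.2) :=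
        Finset.sum_congr rfl fun p _ => h3 p
    _ = ∑ i, ∑ j, if i = j then 0 else B i j := Fintype.sum_prod_type _

lemma pair_subtype_sum (φ : Fin N × Fin N → ℝ) :
    ∑ w : {p : Fin N × Fin N // p.1 < p.2}, φ w.1
      = ∑ p ∈ univ.filter (fun p : Fin N × Fin N => p.1 < p.2), φ p :=
  (Finset.sum_subtype (p := fun p : Fin N × Fin N => p.1 < p.2) _
    (fun p => by simp) φ).symm

lemma card_pairs (hN : 2 ≤ N) :
    ((Fintype.card {p : Fin N × Fin N // p.1 < p.2}) : ℝ) * 2 = N * (N - 1) := by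
  have h3 := sym_pair_sum (fun _ _ : Fin N => (1:ℝ))
  have h4 : ∑ p ∈ univ.filter (fun p : Fin N × Fin N => p.1 < p.2), ((1:ℝ) + 1)
      = ((Fintype.card {p : Fin N × Fin N // p.1 < p.2}) : ℝ) * 2 := by
    rw [Finset.sum_const, Fintype.card_subtype, nsmul_eq_mul]
    ring
  have h5 : ∑ i : Fin N, ∑ j : Fin N, (if i = j then (0:ℝ) else 1) = N * (N - 1) := by
    have hrow : ∀ i : Fin N, ∑ j : Fin N, (if i = j then (0:ℝ) else 1) = N - 1 := by
      intro i
      have : ∑ j : Fin N, (if i = j then (0:ℝ) else 1)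
          = ∑ j : Fin N, ((1:ℝ) - if i = j then 1 else 0) :=
        Finset.sum_congr rfl fun j _ => by split <;> simp
      rw [this, Finset.sum_sub_distrib, Finset.sum_ite_eq, Finset.sum_const]
      simp
    rw [Finset.sum_congr rfl fun i _ => hrow i, Finset.sum_const]
    simp [Fintype.card_fin, nsmul_eq_mul]
  rw [← h4, h3, h5]

lemma tau_exists (hN : 2 ≤ N) (c : Fin N → ℝ) (hc : ∑ i, c i = 0) :
    ∃ τ : Fin N → Fin N → ℝ,
      (∀ i j, 0 ≤ τ i j) ∧ (∀ i j, τ i j ≤ 1) ∧ (∀ i, τ i i = 0) ∧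
      (∀ i j, τ i j * c i + τ j i * c j = 0) ∧ (∀ i, ∑ j, τ i j = 1) := by
  classical
  set S : ℝ := ∑ i ∈ univ.filter (fun i => 0 < c i), c i with hS
  have hSnn : 0 ≤ S := Finset.sum_nonneg fun i hi => le_of_lt (mem_filter.1 hi).2
  have hsub : ∑ i ∈ univ.filter (fun i => ¬ 0 < c i), c i
      = ∑ i ∈ univ.filter (fun i => c i < 0), c i := by
    refine (Finset.sum_subset ?_ ?_).symm
    · intro i hi
      have h1 : c i < 0 := (mem_filter.1 hi).2
      exact mem_filter.2 ⟨mem_univ _, not_lt.2 (le_of_lt h1)⟩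
    · intro i hi hni
      have h1 : ¬ 0 < c i := (mem_filter.1 hi).2
      have h2 : ¬ c i < 0 := fun h => hni (mem_filter.2 ⟨mem_univ _, h⟩)
      linarith [not_lt.1 h1, not_lt.1 h2]
  have hsplit : S + ∑ i ∈ univ.filter (fun i => c i < 0), c i = 0 := by
    rw [← hsub, hS, Finset.sum_filter_add_sum_filter_not]; exact hc
  have hneg : ∑ i ∈ univ.filter (fun i => c i < 0), (- c i) = S := by
    rw [Finset.sum_neg_distrib]; linarith
  have hmaxpos : ∀ i, 0 < c i → c i ≤ S := fun i hi =>
    Finset.single_le_sum (fun j hj => le_of_lt (mem_filter.1 hj).2)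
      (mem_filter.2 ⟨mem_univ _, hi⟩)
  have hmaxneg : ∀ i, c i < 0 → - c i ≤ S := by
    intro i hi
    calc - c i ≤ ∑ j ∈ univ.filter (fun j => c j < 0), (- c j) :=
        Finset.single_le_sum (f := fun j => - c j)
          (fun j hj => by
            have h2 := (mem_filter.1 hj).2
            show (0:ℝ) ≤ - c j
            linarith)
          (mem_filter.2 ⟨mem_univ _, hi⟩)
      _ = S := hneg
  have hSpos : ∀ i, c i ≠ 0 → 0 < S := by
    intro i hi
    rcases lt_or_gt_of_ne hi with hlt | hgt
    · linarith [hmaxneg i hlt]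
    · linarith [hmaxpos i hgt]
  have hN1 : (1:ℝ) ≤ (N:ℝ) - 1 := by
    have : (2:ℝ) ≤ (N:ℝ) := by exact_mod_cast hN
    linarith
  refine ⟨fun i j => if i = j then 0 else if c i = 0 then ((N:ℝ)-1)⁻¹ else
      if 0 < c i then (if c j < 0 then - c j / S else 0)
      else (if 0 < c j then c j / S else 0), ?_, ?_, ?_, ?_, ?_⟩
  · -- nonneg
    intro i j
    by_cases hij : i = j; · simp [hij]
    by_cases h0 : c i = 0
    · simp only [hij, h0, if_false, if_true]
      positivity
    have hSp := hSpos i h0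
    by_cases hp : 0 < c i
    · simp only [hij, h0, hp, if_false, if_true]
      split
      · next hj => exact div_nonneg (by linarith) hSnn
      · exact le_refl 0
    · simp only [hij, h0, hp, if_false]
      split
      · next hj => exact div_nonneg (by linarith) hSnn
      · exact le_refl 0
  · -- ≤ 1
    intro i j
    by_cases hij : i = j; · simp [hij]
    by_cases h0 : c i = 0
    · simp only [hij, h0, if_false, if_true]
      rw [inv_le_one_iff₀]; right; exact hN1
    have hSp := hSpos i h0
    by_cases hp : 0 < c i
    · simp only [hij, h0, hp, if_false, if_true]
      split
      · next hj => rw [div_le_one hSp]; exact hmaxneg j hj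
      · linarith
    · simp only [hij, h0, hp, if_false]
      split
      · next hj => rw [div_le_one hSp]; exact hmaxpos j hj
      · linarith
  · intro i; simp
  · -- balance
    intro i j
    by_cases hij : i = j
    · subst hij; simp
    have hji : ¬ j = i := fun h => hij h.symm
    rcases lt_trichotomy (c i) 0 with hi | hi | hi <;>
      rcases lt_trichotomy (c j) 0 with hj | hj | hj
    · simp [hij, hji, ne_of_lt hi, ne_of_lt hj, not_lt_of_gt hi, not_lt_of_gt hj,
        not_lt.2 (le_of_lt hi), not_lt.2 (le_of_lt hj)]
    · simp [hij, hji, ne_of_lt hi, hj, not_lt.2 (le_of_lt hi)]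
    · simp only [hij, hji, if_false, ne_of_lt hi, ne_of_gt hj, not_lt.2 (le_of_lt hi),
        if_true, hj, not_lt_of_gt hj, hi]
      ring
    · simp [hij, hji, hi, ne_of_lt hj, not_lt_of_gt hj]
    · simp [hij, hji, hi, hj]
    · simp [hij, hji, hi, ne_of_gt hj, not_lt_of_gt hj]
    · simp only [hij, hji, if_false, ne_of_gt hi, ne_of_lt hj, hi, not_lt_of_gt hi,
        not_lt.2 (le_of_lt hj), if_true, hj]
      ring
    · simp [hij, hji, ne_of_gt hi, hj, not_lt_of_gt hi]
    · simp [hij, hji, ne_of_gt hi, ne_of_gt hj, hi, hj, not_lt_of_gt hi, not_lt_of_gt hj]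
  · -- row sums
    intro i
    by_cases hci : c i = 0
    · have hval : ∀ j, (if i = j then (0:ℝ) else if c i = 0 then ((N:ℝ)-1)⁻¹ else
          if 0 < c i then (if c j < 0 then - c j / S else 0)
          else (if 0 < c j then c j / S else 0))
          = (if i = j then 0 else ((N:ℝ)-1)⁻¹) := by
        intro j; split; · rfl
        · simp [hci]
      rw [Finset.sum_congr rfl fun j _ => hval j]
      have : ∑ j : Fin N, (if i = j then (0:ℝ) else ((N:ℝ)-1)⁻¹)
          = ∑ j : Fin N, (((N:ℝ)-1)⁻¹ - if i = j then ((N:ℝ)-1)⁻¹ else 0) :=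
        Finset.sum_congr rfl fun j _ => by split <;> simp
      rw [this, Finset.sum_sub_distrib, Finset.sum_ite_eq, Finset.sum_const]
      simp only [mem_univ, if_true, card_univ, Fintype.card_fin, nsmul_eq_mul]
      field_simp
    · have hSp := hSpos i hci
      rcases lt_or_gt_of_ne hci with hi | hi
      · have hval : ∀ j, (if i = j then (0:ℝ) else if c i = 0 then ((N:ℝ)-1)⁻¹ else
            if 0 < c i then (if c j < 0 then - c j / S else 0)
            else (if 0 < c j then c j / S else 0))
            = (if 0 < c j then c j / S else 0) := by
          intro j
          by_cases hij : i = j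
          · subst hij; simp [not_lt_of_gt hi]
          · simp [hij, hci, not_lt_of_gt hi]
        rw [Finset.sum_congr rfl fun j _ => hval j, ← Finset.sum_filter,
          ← Finset.sum_div, ← hS, div_self (ne_of_gt hSp)]
      · have hval : ∀ j, (if i = j then (0:ℝ) else if c i = 0 then ((N:ℝ)-1)⁻¹ else
            if 0 < c i then (if c j < 0 then - c j / S else 0)
            else (if 0 < c j then c j / S else 0))
            = (if c j < 0 then - c j / S else 0) := by
          intro j
          by_cases hij : i = j
          · subst hij; simp [not_lt_of_gt hi, hi]
          · simp [hij, hci, hi]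
        rw [Finset.sum_congr rfl fun j _ => hval j, ← Finset.sum_filter,
          ← Finset.sum_div, hneg, div_self (ne_of_gt hSp)]

end Combinatorics
section Key

variable {n N : ℕ}

lemma key_step (hN : 2 ≤ N) (blk : Fin n → Fin N)
    (L : Fin N → Fin N → ℝ) (hLpos : ∀ i j, 0 < L i j) (hLsym : ∀ i j, L i j = L j i)
    (f h : En n → ℝ) (g : En n → En n) (hg : ∀ x, HasGradientAt f (g x) x)
    (hlip : ∀ (i j : Fin N), i ≠ j → ∀ (y s : En n),
      (∀ l, blk l ≠ i → blk l ≠ j → s l = 0) →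
      ‖(blockProj blk i (g (y + s)) + blockProj blk j (g (y + s))) -
        (blockProj blk i (g y) + blockProj blk j (g y))‖ ≤ L i j * ‖s‖)
    (Hc : Fin n → ℝ → ℝ) (hHconv : ∀ l, ConvexOn ℝ Set.univ (Hc l))
    (hsep : ∀ x : En n, h x = ∑ l, Hc l (x l))
    (a : En n) (F : En n → ℝ) (hF : ∀ x, F x = f x + h x)
    (Γ : Fin N → ℝ) (hΓ : ∀ i, Γ i = (N : ℝ)⁻¹ * ∑ j, L i j)
    (D : En n → Fin N → Fin N → En n)
    (hDsupp : ∀ x i j, i ≠ j → ∀ l, blk l ≠ i → blk l ≠ j → D x i j l = 0)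
    (hDmin : ∀ (x : En n) (i j : Fin N), i ≠ j → ∀ s : En n,
      (∀ l, blk l ≠ i → blk l ≠ j → s l = 0) → ⟪a, s⟫ = 0 →
      f x + ⟪g x, D x i j⟫ + L i j / 2 * ‖D x i j‖ ^ 2 + h (x + D x i j) ≤
      f x + ⟪g x, s⟫ + L i j / 2 * ‖s‖ ^ 2 + h (x + s))
    (dN : En n → En n) (hdNfeas : ∀ x, ⟪a, dN x⟫ = 0)
    (hdNmin : ∀ (x : En n) (s : En n), ⟪a, s⟫ = 0 →
      f x + ⟪g x, dN x⟫ + (N : ℝ) / 2 * blockNormSq blk Γ (dN x) + h (x + dN x) ≤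
      f x + ⟪g x, s⟫ + (N : ℝ) / 2 * blockNormSq blk Γ s + h (x + s))
    (x : En n) :
    ∑ w : {p : Fin N × Fin N // p.1 < p.2}, F (x + D x w.1.1 w.1.2)
      ≤ (Fintype.card {p : Fin N × Fin N // p.1 < p.2} : ℝ) * F x
        - (Fintype.card {p : Fin N × Fin N // p.1 < p.2} : ℝ) / N
            * blockNormSq blk Γ (dN x) := by
  classical
  have hNpos : (0:ℝ) < (N:ℝ) := by
    have : (2:ℝ) ≤ (N:ℝ) := by exact_mod_cast hN
    linarith
  have hN0 : (N:ℝ) ≠ 0 := ne_of_gt hNpos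
  have hNr : (2:ℝ) ≤ (N:ℝ) := by exact_mod_cast hN
  obtain ⟨d, hd⟩ : ∃ y : En n, y = dN x := ⟨_, rfl⟩
  obtain ⟨c, hc⟩ : ∃ cc : Fin N → ℝ, cc = fun i => ⟪a, blockProj blk i d⟫ := ⟨_, rfl⟩
  have hcsum : ∑ i, c i = 0 := by
    rw [hc]
    have h1 : ∑ i, ⟪a, blockProj blk i d⟫ = ⟪a, ∑ i, blockProj blk i d⟫ :=
      (inner_sum _ _ _).symm
    rw [h1, sum_blockProj blk d, hd]
    exact hdNfeas x
  obtain ⟨τ, hτ0, hτ1, hτd, hτb, hτr⟩ := tau_exists hN c hcsum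
  obtain ⟨nrm, hnrm⟩ : ∃ ff : Fin N → ℝ, ff = fun i => ‖blockProj blk i d‖ ^ 2 := ⟨_, rfl⟩
  have hnrmi : ∀ i, nrm i = ‖blockProj blk i d‖ ^ 2 := fun i => by rw [hnrm]
  have hnrm0 : ∀ i, 0 ≤ nrm i := fun i => by rw [hnrmi]; positivity
  obtain ⟨Gi, hGi⟩ : ∃ ff : Fin N → ℝ, ff = fun i => ⟪g x, blockProj blk i d⟫ := ⟨_, rfl⟩
  have hGii : ∀ i, Gi i = ⟪g x, blockProj blk i d⟫ := fun i => by rw [hGi]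
  obtain ⟨Hi, hHi⟩ : ∃ ff : Fin N → ℝ, ff
      = fun i => ∑ l, if blk l = i then (Hc l ((x+d) l) - Hc l (x l)) else 0 := ⟨_, rfl⟩
  have hHii : ∀ i, Hi i = ∑ l, if blk l = i then (Hc l ((x+d) l) - Hc l (x l)) else 0 :=
    fun i => by rw [hHi]
  obtain ⟨A, hA⟩ : ∃ ff : Fin N → ℝ, ff = fun i => Gi i + Hi i := ⟨_, rfl⟩
  have hAi : ∀ i, A i = Gi i + Hi i := fun i => by rw [hA]
  obtain ⟨Bq, hBq⟩ : ∃ b : ℝ, b = blockNormSq blk Γ d := ⟨_, rfl⟩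
  obtain ⟨E, hE⟩ : ∃ e : ℝ, e = ⟪g x, d⟫ := ⟨_, rfl⟩
  obtain ⟨Hd, hHd⟩ : ∃ e : ℝ, e = h (x+d) - h x := ⟨_, rfl⟩
  -- convexity helper
  have hcvx : ∀ (l : Fin n) (u v t : ℝ), 0 ≤ t → t ≤ 1 →
      Hc l (u + t * (v - u)) ≤ Hc l u + t * (Hc l v - Hc l u) := by
    intro l u v t ht0 ht1
    have h2 := (hHconv l).2 (Set.mem_univ u) (Set.mem_univ v)
      (by linarith : (0:ℝ) ≤ 1 - t) ht0 (by ring)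
    simp only [smul_eq_mul] at h2
    have harg : u + t * (v - u) = (1-t) * u + t * v := by ring
    rw [harg]
    linarith
  -- sum of A
  have hsumGi : ∑ i, Gi i = E := by
    rw [hGi, ← inner_sum, sum_blockProj blk d, hE]
  have hsumHi : ∑ i, Hi i = Hd := by
    rw [hHi, Finset.sum_comm]
    have h1 : ∀ l : Fin n,
        ∑ i : Fin N, (if blk l = i then (Hc l ((x+d) l) - Hc l (x l)) else 0)
        = Hc l ((x+d) l) - Hc l (x l) := by
      intro l
      rw [Finset.sum_ite_eq]
      simp
    rw [Finset.sum_congr rfl fun l _ => h1 l, Finset.sum_sub_distrib, ← hsep, ← hsep, hHd]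
  have hsumA : ∑ i, A i = E + Hd := by
    rw [hA, Finset.sum_add_distrib, hsumGi, hsumHi]
  -- the Delta bound via beta
  have hDelta : E + Hd + (N:ℝ)/2 * Bq ≤ - (((N:ℝ)-1)/2) * Bq := by
    obtain ⟨β, hβ⟩ : ∃ b : ℝ, b = ((N:ℝ)-1)/(N:ℝ) := ⟨_, rfl⟩
    have hβ0 : 0 ≤ β := by
      rw [hβ]; apply div_nonneg <;> linarith
    have hβ1 : β ≤ 1 := by rw [hβ, div_le_one hNpos]; linarith
    have hfeasβ : ⟪a, β • d⟫ = 0 := by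
      rw [real_inner_smul_right, hd, hdNfeas x, mul_zero]
    have hmin := hdNmin x (β • d) hfeasβ
    rw [← hd] at hmin
    have hsm : ⟪g x, β • d⟫ = β * E := by
      rw [real_inner_smul_right, hE]
    have hBsm : blockNormSq blk Γ (β • d) = β^2 * Bq := by
      rw [hBq, blockNormSq, blockNormSq, Finset.mul_sum]
      refine Finset.sum_congr rfl fun i _ => ?_
      rw [norm_blockProj_smul_sq]; ring
    have hhβ : h (x + β • d) ≤ h x + β * Hd := by
      have hpt : ∀ l : Fin n, Hc l ((x + β • d) l)
          ≤ Hc l (x l) + β * (Hc l ((x+d) l) - Hc l (x l)) := by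
        intro l
        have harg : (x + β • d) l = x l + β * (((x+d) l) - x l) := by
          have h1 : (x + β • d) l = x l + β * d l := rfl
          have h2 : (x + d) l = x l + d l := rfl
          rw [h1, h2]; ring
        rw [harg]
        exact hcvx l (x l) ((x+d) l) β hβ0 hβ1
      have h2 := Finset.sum_le_sum fun l (_ : l ∈ univ) => hpt l
      rw [← hsep] at h2
      calc h (x + β • d) ≤ ∑ l, (Hc l (x l) + β * (Hc l ((x+d) l) - Hc l (x l))) := h2
        _ = ∑ l, Hc l (x l) + β * (∑ l, Hc l ((x+d) l) - ∑ l, Hc l (x l)) := by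
            rw [Finset.sum_add_distrib, ← Finset.mul_sum, Finset.sum_sub_distrib]
        _ = h x + β * Hd := by rw [← hsep, ← hsep, hHd]
    rw [hsm, hBsm, ← hE, ← hBq] at hmin
    have hxd : h (x+d) = Hd + h x := by rw [hHd]; ring
    have hcomb : E + Hd + (N:ℝ)/2 * Bq ≤ β*E + (N:ℝ)/2*(β^2*Bq) + β*Hd := by
      linarith [hmin, hhβ, hxd]
    have h4 : (1-β)*(E+Hd) ≤ (N:ℝ)/2*(β^2-1)*Bq := by linarith [hcomb]
    have hb1 : 1 - β = 1/(N:ℝ) := by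
      rw [hβ]; field_simp; ring
    have hb2 : (N:ℝ)/2*(β^2-1) = -((2*(N:ℝ)-1)/(2*(N:ℝ))) := by
      rw [hβ]; field_simp; ring
    rw [hb1, hb2] at h4
    have h5 := mul_le_mul_of_nonneg_left h4 (le_of_lt hNpos)
    have e1 : (N:ℝ)*(1/(N:ℝ)*(E+Hd)) = E+Hd := by field_simp
    have e2 : (N:ℝ)*(-((2*(N:ℝ)-1)/(2*(N:ℝ)))*Bq) = -((2*(N:ℝ)-1)/2)*Bq := by
      field_simp
    rw [e1, e2] at h5
    have hexp2 : -(((N:ℝ)-1)/2)*Bq - (N:ℝ)/2*Bq = -((2*(N:ℝ)-1)/2)*Bq := by ring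
    linarith [h5, hexp2]
  -- per pair bound
  have hperpair : ∀ i j : Fin N, i < j →
      F (x + D x i j) ≤ (f x + h x) + ((τ i j * A i + τ j i * A j)
        + ((L i j/2 * (τ i j^2 * nrm i)) + (L j i/2 * (τ j i^2 * nrm j)))) := by
    intro i j hlt
    have hij : i ≠ j := ne_of_lt hlt
    obtain ⟨s, hsdef⟩ : ∃ s : En n,
        s = τ i j • blockProj blk i d + τ j i • blockProj blk j d := ⟨_, rfl⟩
    have hsl : ∀ l, s l = τ i j * (if blk l = i then d l else 0)
        + τ j i * (if blk l = j then d l else 0) := by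
      intro l; rw [hsdef]; rfl
    have hs_supp : ∀ l, blk l ≠ i → blk l ≠ j → s l = 0 := by
      intro l h1 h2
      rw [hsl l, if_neg h1, if_neg h2, mul_zero, mul_zero, add_zero]
    have hs_feas : ⟪a, s⟫ = 0 := by
      rw [hsdef, inner_add_right, real_inner_smul_right, real_inner_smul_right]
      have hb := hτb i j
      rw [hc] at hb
      exact hb
    have hdescent : f (x + D x i j) ≤ f x + ⟪g x, D x i j⟫ + L i j / 2 * ‖D x i j‖ ^ 2 :=
      descent_lemma f g hg L hlip hij x (D x i j) (hDsupp x i j hij)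
    have hmin := hDmin x i j hij s hs_supp hs_feas
    have hinner : ⟪g x, s⟫ = τ i j * Gi i + τ j i * Gi j := by
      rw [hsdef, inner_add_right, real_inner_smul_right, real_inner_smul_right,
        hGii, hGii]
    have hnorms : ‖s‖^2 = τ i j^2 * nrm i + τ j i^2 * nrm j := by
      rw [hsdef, ← blockProj_smul, ← blockProj_smul, norm_pair_sq hij,
        norm_blockProj_smul_sq, norm_blockProj_smul_sq, hnrmi, hnrmi]
    have hh : h (x + s) ≤ h x + (τ i j * Hi i + τ j i * Hi j) := by
      have hpt : ∀ l : Fin n, Hc l ((x+s) l)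
          ≤ Hc l (x l) + ((if blk l = i then τ i j * (Hc l ((x+d) l) - Hc l (x l)) else 0)
            + (if blk l = j then τ j i * (Hc l ((x+d) l) - Hc l (x l)) else 0)) := by
        intro l
        have hxs : (x + s) l = x l + s l := rfl
        have hxd : (x + d) l = x l + d l := rfl
        by_cases h1 : blk l = i
        · have h2 : blk l ≠ j := fun hcon => hij ((h1.symm.trans hcon))
          have harg : (x+s) l = x l + τ i j * (((x+d) l) - x l) := by
            rw [hxs, hsl l, if_pos h1, if_neg h2, hxd]; ring
          rw [harg, if_pos h1, if_neg h2, add_zero]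
          exact hcvx l (x l) ((x+d) l) (τ i j) (hτ0 i j) (hτ1 i j)
        · by_cases h2 : blk l = j
          · have harg : (x+s) l = x l + τ j i * (((x+d) l) - x l) := by
              rw [hxs, hsl l, if_neg h1, if_pos h2, hxd]; ring
            rw [harg, if_neg h1, if_pos h2, zero_add]
            exact hcvx l (x l) ((x+d) l) (τ j i) (hτ0 j i) (hτ1 j i)
          · have harg : (x+s) l = x l := by
              rw [hxs, hs_supp l h1 h2, add_zero]
            rw [harg, if_neg h1, if_neg h2]
            simp
      have hsum := Finset.sum_le_sum fun l (_ : l ∈ univ) => hpt l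
      rw [← hsep] at hsum
      have hIi : ∑ l, (if blk l = i then τ i j * (Hc l ((x+d) l) - Hc l (x l)) else 0)
          = τ i j * Hi i := by
        rw [hHii, Finset.mul_sum]
        exact Finset.sum_congr rfl fun l _ => by rw [mul_ite, mul_zero]
      have hIj : ∑ l, (if blk l = j then τ j i * (Hc l ((x+d) l) - Hc l (x l)) else 0)
          = τ j i * Hi j := by
        rw [hHii, Finset.mul_sum]
        exact Finset.sum_congr rfl fun l _ => by rw [mul_ite, mul_zero]
      calc h (x + s) ≤ ∑ l, (Hc l (x l)
            + ((if blk l = i then τ i j * (Hc l ((x+d) l) - Hc l (x l)) else 0)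
            + (if blk l = j then τ j i * (Hc l ((x+d) l) - Hc l (x l)) else 0))) := hsum
        _ = ∑ l, Hc l (x l) + (τ i j * Hi i + τ j i * Hi j) := by
            rw [Finset.sum_add_distrib, Finset.sum_add_distrib, hIi, hIj]
        _ = h x + (τ i j * Hi i + τ j i * Hi j) := by rw [← hsep]
    rw [hF]
    calc f (x + D x i j) + h (x + D x i j)
        ≤ f x + ⟪g x, D x i j⟫ + L i j / 2 * ‖D x i j‖ ^ 2 + h (x + D x i j) := by
          linarith [hdescent]
      _ ≤ f x + ⟪g x, s⟫ + L i j / 2 * ‖s‖ ^ 2 + h (x + s) := hmin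
      _ ≤ (f x + h x) + ((τ i j * A i + τ j i * A j)
            + ((L i j/2 * (τ i j^2 * nrm i)) + (L j i/2 * (τ j i^2 * nrm j)))) := by
          rw [hinner, hnorms, hAi, hAi]
          have hq : L i j / 2 * (τ i j^2 * nrm i + τ j i^2 * nrm j)
              = L i j/2 * (τ i j^2 * nrm i) + L j i/2 * (τ j i^2 * nrm j) := by
            rw [hLsym j i]; ring
          linarith [hh, le_of_eq hq, le_of_eq hq.symm]
  -- summation over pairs
  obtain ⟨Pc, hPc⟩ : ∃ p : ℝ, p = (Fintype.card {q : Fin N × Fin N // q.1 < q.2} : ℝ) :=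
    ⟨_, rfl⟩
  have hcard : Pc * 2 = (N:ℝ) * ((N:ℝ) - 1) := by rw [hPc]; exact card_pairs hN
  have hCsum : ∑ _p ∈ univ.filter (fun p : Fin N × Fin N => p.1 < p.2), (f x + h x)
      = Pc * (f x + h x) := by
    rw [Finset.sum_const, ← Fintype.card_subtype, nsmul_eq_mul, hPc]
  have hBsum : ∑ p ∈ univ.filter (fun p : Fin N × Fin N => p.1 < p.2),
      (τ p.1 p.2 * A p.1 + τ p.2 p.1 * A p.2) = E + Hd := by
    rw [sym_pair_sum (fun i j => τ i j * A i)]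
    have hrow : ∀ i : Fin N, (∑ j, if i = j then (0:ℝ) else τ i j * A i) = A i := by
      intro i
      have hval : ∀ j : Fin N, (if i = j then (0:ℝ) else τ i j * A i) = τ i j * A i := by
        intro j
        by_cases hij : i = j
        · rw [if_pos hij, ← hij, hτd i, zero_mul]
        · rw [if_neg hij]
      rw [Finset.sum_congr rfl fun j _ => hval j, ← Finset.sum_mul, hτr i, one_mul]
    rw [Finset.sum_congr rfl fun i _ => hrow i, hsumA]
  have hQsum : ∑ p ∈ univ.filter (fun p : Fin N × Fin N => p.1 < p.2),
      ((L p.1 p.2/2 * (τ p.1 p.2^2 * nrm p.1)) + (L p.2 p.1/2 * (τ p.2 p.1^2 * nrm p.2)))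
      ≤ (N:ℝ)/2 * Bq := by
    rw [sym_pair_sum (fun i j => L i j/2 * (τ i j^2 * nrm i))]
    have hstep : ∀ i j : Fin N, (if i = j then (0:ℝ) else L i j/2 * (τ i j^2 * nrm i))
        ≤ L i j / 2 * nrm i := by
      intro i j
      have hL0 : (0:ℝ) ≤ L i j / 2 := by linarith [hLpos i j]
      by_cases hij : i = j
      · rw [if_pos hij]
        exact mul_nonneg hL0 (hnrm0 i)
      · rw [if_neg hij]
        have hτsq : τ i j ^ 2 ≤ 1 := by
          have h1 := hτ0 i j
          have h2 := hτ1 i j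
          nlinarith
        have h3 : τ i j ^ 2 * nrm i ≤ 1 * nrm i :=
          mul_le_mul_of_nonneg_right hτsq (hnrm0 i)
        rw [one_mul] at h3
        exact mul_le_mul_of_nonneg_left h3 hL0
    calc (∑ i, ∑ j, if i = j then (0:ℝ) else L i j/2 * (τ i j^2 * nrm i))
        ≤ ∑ i, ∑ j, L i j / 2 * nrm i :=
          Finset.sum_le_sum fun i _ => Finset.sum_le_sum fun j _ => hstep i j
      _ = ∑ i, (N:ℝ)/2 * (Γ i * nrm i) := by
          refine Finset.sum_congr rfl fun i _ => ?_
          have hsumL : (∑ j, L i j) = (N:ℝ) * Γ i := by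
            rw [hΓ i, ← mul_assoc, mul_inv_cancel₀ hN0, one_mul]
          calc ∑ j, L i j / 2 * nrm i = (∑ j, L i j) * (nrm i / 2) := by
                rw [Finset.sum_mul]
                exact Finset.sum_congr rfl fun j _ => by ring
            _ = (N:ℝ)/2 * (Γ i * nrm i) := by rw [hsumL]; ring
      _ = (N:ℝ)/2 * Bq := by
          rw [← Finset.mul_sum, hBq, blockNormSq]
          congr 1
          exact Finset.sum_congr rfl fun i _ => by rw [hnrmi]
  have hmain : ∑ w : {p : Fin N × Fin N // p.1 < p.2}, F (x + D x w.1.1 w.1.2)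
      ≤ Pc * (f x + h x) + ((E + Hd) + (N:ℝ)/2 * Bq) := by
    calc ∑ w : {p : Fin N × Fin N // p.1 < p.2}, F (x + D x w.1.1 w.1.2)
        = ∑ p ∈ univ.filter (fun p : Fin N × Fin N => p.1 < p.2), F (x + D x p.1 p.2) :=
          pair_subtype_sum (fun p => F (x + D x p.1 p.2))
      _ ≤ ∑ p ∈ univ.filter (fun p : Fin N × Fin N => p.1 < p.2),
            ((f x + h x) + ((τ p.1 p.2 * A p.1 + τ p.2 p.1 * A p.2)
              + ((L p.1 p.2/2 * (τ p.1 p.2^2 * nrm p.1))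
                + (L p.2 p.1/2 * (τ p.2 p.1^2 * nrm p.2))))) :=
          Finset.sum_le_sum fun p hp => hperpair p.1 p.2 (mem_filter.1 hp).2
      _ = (∑ _p ∈ univ.filter (fun p : Fin N × Fin N => p.1 < p.2), (f x + h x))
          + ((∑ p ∈ univ.filter (fun p : Fin N × Fin N => p.1 < p.2),
              (τ p.1 p.2 * A p.1 + τ p.2 p.1 * A p.2))
            + (∑ p ∈ univ.filter (fun p : Fin N × Fin N => p.1 < p.2),
              ((L p.1 p.2/2 * (τ p.1 p.2^2 * nrm p.1))
                + (L p.2 p.1/2 * (τ p.2 p.1^2 * nrm p.2))))) := by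
          rw [← Finset.sum_add_distrib, ← Finset.sum_add_distrib]
      _ ≤ Pc * (f x + h x) + ((E + Hd) + (N:ℝ)/2 * Bq) := by
          rw [hCsum, hBsum]
          linarith [hQsum]
  have hfinal : Pc / (N:ℝ) = ((N:ℝ)-1)/2 := by
    rw [div_eq_div_iff hN0 (by norm_num : (2:ℝ) ≠ 0)]
    linarith [hcard]
  rw [← hPc, hF x, ← hd, ← hBq]
  calc ∑ w : {p : Fin N × Fin N // p.1 < p.2}, F (x + D x w.1.1 w.1.2)
      ≤ Pc * (f x + h x) + ((E + Hd) + (N:ℝ)/2 * Bq) := hmain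
    _ ≤ Pc * (f x + h x) + - (((N:ℝ)-1)/2) * Bq := by linarith [hDelta]
    _ = Pc * (f x + h x) - Pc / (N:ℝ) * Bq := by rw [hfinal]; ring

end Key


/-- Convergence rate of the 2-random coordinate descent method with
uniform pair selection on `min {f(x) + h(x) : aᵀx = b}`.  The random iterates are encoded
by their values `X k w` along every realization `w` of the first `k` i.i.d. uniform
unordered block pairs, so that `E[(M₂(x^l, Γ))²]` is the normalized sum below, where
`M₂(x, Γ) = ‖d_{NΓ}(x)‖_Γ`.  Then
`min_{0 ≤ l ≤ k} E[(M₂(x^l, Γ))²] ≤ N (F(x⁰) − F*)/(k+1)` where `F*` is the optimal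
value of the constrained problem. -/
theorem stmt14 {n N : ℕ} (hN : 2 ≤ N) (blk : Fin n → Fin N)
    (L : Fin N → Fin N → ℝ) (hLpos : ∀ i j, 0 < L i j) (hLsym : ∀ i j, L i j = L j i)
    (f h : En n → ℝ) (g : En n → En n) (hg : ∀ x, HasGradientAt f (g x) x)
    (hlip : ∀ (i j : Fin N), i ≠ j → ∀ (y s : En n),
      (∀ l, blk l ≠ i → blk l ≠ j → s l = 0) →
      ‖(blockProj blk i (g (y + s)) + blockProj blk j (g (y + s))) -
        (blockProj blk i (g y) + blockProj blk j (g y))‖ ≤ L i j * ‖s‖)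
    (Hc : Fin n → ℝ → ℝ) (hHconv : ∀ l, ConvexOn ℝ Set.univ (Hc l))
    (hsep : ∀ x : En n, h x = ∑ l, Hc l (x l)) (hcont : Continuous h)
    (a : En n) (ha : a ≠ 0) (b : ℝ)
    (F : En n → ℝ) (hF : ∀ x, F x = f x + h x)
    (Fstar : ℝ) (hFstar : IsGLB (F '' {x : En n | ⟪a, x⟫ = b}) Fstar)
    (Γ : Fin N → ℝ) (hΓ : ∀ i, Γ i = (N : ℝ)⁻¹ * ∑ j, L i j)
    -- the 2-block coordinate descent directions at each point
    (D : En n → Fin N → Fin N → En n)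
    (hDsupp : ∀ x i j, i ≠ j → ∀ l, blk l ≠ i → blk l ≠ j → D x i j l = 0)
    (hDfeas : ∀ x i j, ⟪a, D x i j⟫ = 0)
    (hDmin : ∀ (x : En n) (i j : Fin N), i ≠ j → ∀ s : En n,
      (∀ l, blk l ≠ i → blk l ≠ j → s l = 0) → ⟪a, s⟫ = 0 →
      f x + ⟪g x, D x i j⟫ + L i j / 2 * ‖D x i j‖ ^ 2 + h (x + D x i j) ≤
      f x + ⟪g x, s⟫ + L i j / 2 * ‖s‖ ^ 2 + h (x + s))
    -- the constrained proximal map `d_{NΓ}`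
    (dN : En n → En n) (hdNfeas : ∀ x, ⟪a, dN x⟫ = 0)
    (hdNmin : ∀ (x : En n) (s : En n), ⟪a, s⟫ = 0 →
      f x + ⟪g x, dN x⟫ + (N : ℝ) / 2 * blockNormSq blk Γ (dN x) + h (x + dN x) ≤
      f x + ⟪g x, s⟫ + (N : ℝ) / 2 * blockNormSq blk Γ s + h (x + s))
    -- the trajectories along each realization of the random pairs
    (x0 : En n) (hx0 : ⟪a, x0⟫ = b)
    (X : (k : ℕ) → (Fin k → {p : Fin N × Fin N // p.1 < p.2}) → En n)
    (hX0 : ∀ w, X 0 w = x0)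
    (hXs : ∀ k (w : Fin (k + 1) → {p : Fin N × Fin N // p.1 < p.2}),
      X (k + 1) w = X k (fun t => w t.castSucc) +
        D (X k (fun t => w t.castSucc)) (w (Fin.last k)).1.1 (w (Fin.last k)).1.2)
    (k : ℕ) :
    ∃ l ≤ k,
      ((Fintype.card {p : Fin N × Fin N // p.1 < p.2} : ℝ) ^ l)⁻¹ *
          (∑ w : Fin l → {p : Fin N × Fin N // p.1 < p.2},
            blockNormSq blk Γ (dN (X l w))) ≤
        N * (F x0 - Fstar) / (k + 1) := by
  classical
  have hNpos : (0:ℝ) < (N:ℝ) := by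
    have : (2:ℝ) ≤ (N:ℝ) := by exact_mod_cast hN
    linarith
  have hN0 : (N:ℝ) ≠ 0 := ne_of_gt hNpos
  have hpair : Nonempty {p : Fin N × Fin N // p.1 < p.2} := by
    refine ⟨⟨(⟨0, by omega⟩, ⟨1, by omega⟩), ?_⟩⟩
    simp [Fin.lt_def]
  obtain ⟨q, hq⟩ : ∃ r : ℝ, r = (Fintype.card {p : Fin N × Fin N // p.1 < p.2} : ℝ) :=
    ⟨_, rfl⟩
  have hqpos : 0 < q := by
    rw [hq]
    exact_mod_cast Fintype.card_pos
  have hq0 : q ≠ 0 := ne_of_gt hqpos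
  -- feasibility of iterates
  have hfeas : ∀ (l : ℕ) (w : Fin l → {p : Fin N × Fin N // p.1 < p.2}), ⟪a, X l w⟫ = b := by
    intro l
    induction l with
    | zero => intro w; rw [hX0 w]; exact hx0
    | succ m ih =>
      intro w
      rw [hXs m w, inner_add_right, ih (fun t => w t.castSucc), hDfeas, add_zero]
  have hFlow : ∀ (l : ℕ) (w : Fin l → {p : Fin N × Fin N // p.1 < p.2}),
      Fstar ≤ F (X l w) := by
    intro l w
    exact hFstar.1 (Set.mem_image_of_mem F (hfeas l w))
  obtain ⟨T, hT⟩ : ∃ T : ℕ → ℝ, T = fun l => (q ^ l)⁻¹ *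
      ∑ w : Fin l → {p : Fin N × Fin N // p.1 < p.2}, F (X l w) := ⟨_, rfl⟩
  obtain ⟨U, hU⟩ : ∃ U : ℕ → ℝ, U = fun l => (q ^ l)⁻¹ *
      ∑ w : Fin l → {p : Fin N × Fin N // p.1 < p.2}, blockNormSq blk Γ (dN (X l w)) :=
    ⟨_, rfl⟩
  have hTl : ∀ l, T l = (q ^ l)⁻¹ *
      ∑ w : Fin l → {p : Fin N × Fin N // p.1 < p.2}, F (X l w) := fun l => by rw [hT]
  have hUl : ∀ l, U l = (q ^ l)⁻¹ *
      ∑ w : Fin l → {p : Fin N × Fin N // p.1 < p.2}, blockNormSq blk Γ (dN (X l w)) :=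
    fun l => by rw [hU]
  -- one step of the expected descent
  have hstep : ∀ l : ℕ, T (l + 1) ≤ T l - 1/(N:ℝ) * U l := by
    intro l
    have hre : ∑ w : Fin (l+1) → {p : Fin N × Fin N // p.1 < p.2}, F (X (l+1) w)
        = ∑ z : {p : Fin N × Fin N // p.1 < p.2} ×
            (Fin l → {p : Fin N × Fin N // p.1 < p.2}),
            F (X (l+1) (Fin.snoc z.2 z.1)) := by
      refine (Fintype.sum_equiv (Fin.snocEquiv (fun _ => {p : Fin N × Fin N // p.1 < p.2}))
        _ _ fun z => ?_).symm
      rfl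
    have hterm : ∀ (v : Fin l → {p : Fin N × Fin N // p.1 < p.2})
        (p : {p : Fin N × Fin N // p.1 < p.2}),
        X (l+1) (Fin.snoc v p) = X l v + D (X l v) p.1.1 p.1.2 := by
      intro v p
      rw [hXs l (Fin.snoc v p)]
      have h1 : (fun t : Fin l => (Fin.snoc v p :
          Fin (l+1) → {p : Fin N × Fin N // p.1 < p.2}) t.castSucc) = v :=
        funext fun t => by simp
      have h2 : (Fin.snoc v p : Fin (l+1) → {p : Fin N × Fin N // p.1 < p.2}) (Fin.last l)
          = p := by simp
      rw [h1, h2]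
    have hinner : ∀ v : Fin l → {p : Fin N × Fin N // p.1 < p.2},
        ∑ p : {p : Fin N × Fin N // p.1 < p.2}, F (X (l+1) (Fin.snoc v p))
          ≤ q * F (X l v) - q / N * blockNormSq blk Γ (dN (X l v)) := by
      intro v
      have := key_step hN blk L hLpos hLsym f h g hg hlip Hc hHconv hsep a F hF Γ hΓ
        D hDsupp hDmin dN hdNfeas hdNmin (X l v)
      rw [← hq] at this
      calc ∑ p : {p : Fin N × Fin N // p.1 < p.2}, F (X (l+1) (Fin.snoc v p))
          = ∑ p : {p : Fin N × Fin N // p.1 < p.2}, F (X l v + D (X l v) p.1.1 p.1.2) :=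
            Finset.sum_congr rfl fun p _ => by rw [hterm v p]
        _ ≤ q * F (X l v) - q / N * blockNormSq blk Γ (dN (X l v)) := this
    have hsum : ∑ w : Fin (l+1) → {p : Fin N × Fin N // p.1 < p.2}, F (X (l+1) w)
        ≤ q * (∑ v : Fin l → {p : Fin N × Fin N // p.1 < p.2}, F (X l v))
          - q / N * (∑ v : Fin l → {p : Fin N × Fin N // p.1 < p.2},
              blockNormSq blk Γ (dN (X l v))) := by
      rw [hre, Fintype.sum_prod_type_right]
      calc ∑ v : Fin l → {p : Fin N × Fin N // p.1 < p.2},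
            ∑ p : {p : Fin N × Fin N // p.1 < p.2}, F (X (l+1) (Fin.snoc v p))
          ≤ ∑ v : Fin l → {p : Fin N × Fin N // p.1 < p.2},
              (q * F (X l v) - q / N * blockNormSq blk Γ (dN (X l v))) :=
            Finset.sum_le_sum fun v _ => hinner v
        _ = _ := by
            rw [Finset.sum_sub_distrib, ← Finset.mul_sum, ← Finset.mul_sum]
    have hq1 : (q ^ (l+1))⁻¹ = (q ^ l)⁻¹ * q⁻¹ := by rw [pow_succ, mul_inv]
    have hmono := mul_le_mul_of_nonneg_left hsum
      (le_of_lt (inv_pos.2 (pow_pos hqpos (l+1))))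
    rw [hTl (l+1), hTl l, hUl l]
    calc (q ^ (l+1))⁻¹ * ∑ w : Fin (l+1) → {p : Fin N × Fin N // p.1 < p.2}, F (X (l+1) w)
        ≤ (q ^ (l+1))⁻¹ * (q * (∑ v : Fin l → {p : Fin N × Fin N // p.1 < p.2}, F (X l v))
          - q / N * (∑ v : Fin l → {p : Fin N × Fin N // p.1 < p.2},
              blockNormSq blk Γ (dN (X l v)))) := hmono
      _ = (q ^ l)⁻¹ * (∑ v : Fin l → {p : Fin N × Fin N // p.1 < p.2}, F (X l v))
          - 1/(N:ℝ) * ((q ^ l)⁻¹ * (∑ v : Fin l → {p : Fin N × Fin N // p.1 < p.2},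
              blockNormSq blk Γ (dN (X l v)))) := by
          rw [hq1]
          field_simp
  -- telescoping
  have htel : ∀ m : ℕ, T m + 1/(N:ℝ) * (∑ l ∈ Finset.range m, U l) ≤ T 0 := by
    intro m
    induction m with
    | zero => simp
    | succ m ih =>
      have h1 := hstep m
      rw [Finset.sum_range_succ]
      have h2 : 1/(N:ℝ) * (∑ l ∈ Finset.range m, U l + U m)
          = 1/(N:ℝ) * (∑ l ∈ Finset.range m, U l) + 1/(N:ℝ) * U m := by ring
      rw [h2]
      linarith [ih, h1]
  have hT0 : T 0 = F x0 := by
    rw [hTl 0]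
    have h1 : ∑ w : Fin 0 → {p : Fin N × Fin N // p.1 < p.2}, F (X 0 w)
        = ∑ _w : Fin 0 → {p : Fin N × Fin N // p.1 < p.2}, F x0 :=
      Finset.sum_congr rfl fun w _ => by rw [hX0]
    rw [h1, Finset.sum_const, Finset.card_univ]
    have h2 : Fintype.card (Fin 0 → {p : Fin N × Fin N // p.1 < p.2}) = 1 := by
      simp
    rw [h2, one_smul, pow_zero, inv_one, one_mul]
  have hTlow : ∀ m : ℕ, Fstar ≤ T m := by
    intro m
    rw [hTl m]
    have h1 : ∑ _w : Fin m → {p : Fin N × Fin N // p.1 < p.2}, Fstar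
        ≤ ∑ w : Fin m → {p : Fin N × Fin N // p.1 < p.2}, F (X m w) :=
      Finset.sum_le_sum fun w _ => hFlow m w
    have h2 : ∑ _w : Fin m → {p : Fin N × Fin N // p.1 < p.2}, Fstar = q ^ m * Fstar := by
      rw [Finset.sum_const, Finset.card_univ, nsmul_eq_mul]
      congr 1
      rw [Fintype.card_fun, Fintype.card_fin, hq]
      push_cast
      ring
    have h3 := mul_le_mul_of_nonneg_left h1 (le_of_lt (inv_pos.2 (pow_pos hqpos m)))
    calc Fstar = (q ^ m)⁻¹ * (q ^ m * Fstar) := by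
          field_simp
      _ = (q ^ m)⁻¹ * ∑ _w : Fin m → {p : Fin N × Fin N // p.1 < p.2}, Fstar := by rw [h2]
      _ ≤ _ := h3
  -- conclusion
  have hsumU : ∑ l ∈ Finset.range (k+1), U l ≤ (N:ℝ) * (F x0 - Fstar) := by
    have h1 := htel (k+1)
    have h2 := hTlow (k+1)
    have h3 : 1/(N:ℝ) * (∑ l ∈ Finset.range (k+1), U l) ≤ F x0 - Fstar := by
      rw [hT0] at h1
      linarith
    have h4 := mul_le_mul_of_nonneg_left h3 (le_of_lt hNpos)
    calc ∑ l ∈ Finset.range (k+1), U l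
        = (N:ℝ) * (1/(N:ℝ) * (∑ l ∈ Finset.range (k+1), U l)) := by
          field_simp
      _ ≤ (N:ℝ) * (F x0 - Fstar) := h4
  obtain ⟨l0, hl0mem, hl0min⟩ := Finset.exists_min_image (Finset.range (k+1)) U
    ⟨0, Finset.mem_range.2 (by omega)⟩
  have hl0k : l0 ≤ k := by
    have := Finset.mem_range.1 hl0mem
    omega
  refine ⟨l0, hl0k, ?_⟩
  have hmin' : ((k:ℝ)+1) * U l0 ≤ ∑ l ∈ Finset.range (k+1), U l := by
    have h1 : ∑ _l ∈ Finset.range (k+1), U l0 ≤ ∑ l ∈ Finset.range (k+1), U l :=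
      Finset.sum_le_sum fun l hl => hl0min l hl
    rw [Finset.sum_const, Finset.card_range, nsmul_eq_mul] at h1
    have h2 : ((k:ℝ)+1) = ((k+1 : ℕ) : ℝ) := by push_cast; ring
    rw [h2]
    exact h1
  have hfin : ((k:ℝ)+1) * U l0 ≤ (N:ℝ) * (F x0 - Fstar) := le_trans hmin' hsumU
  have hkpos : (0:ℝ) < (k:ℝ)+1 := by positivity
  have : U l0 ≤ (N:ℝ) * (F x0 - Fstar) / ((k:ℝ)+1) := by
    rw [le_div_iff₀ hkpos]
    linarith [hfin]
  rw [hUl l0, hq] at this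
  exact this
end
end

section
/- For the 2-random coordinate descent method with probabilities p_{ij} applied to min{f(x) : aᵀx = b} with smooth f (h = 0), one step satisfies E[f(x⁺) | x] ≤ f(x) − (ν₂(Q)/2)‖∇f(x)_⊥‖², where ∇f(x)_⊥ is the orthogonal projection of ∇f(x) onto S = {s : aᵀs = 0}, Q = Σ_{i,j} (p_{ij}/L_{ij}) Q_{ij}, and ν₂(Q) is the second smallest eigenvalue of Q. Consequently min_{0 ≤ l ≤ k} E[‖∇f(x^l)_⊥‖²] ≤ 2(f(x⁰) − f*)/(ν₂(Q)(k+1)). -/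
open scoped BigOperators RealInnerProductSpace
open Finset Filter

noncomputable section

/-- Matrix–vector multiplication landing in Euclidean space. -/
def mvE {n : ℕ} (Q : Matrix (Fin n) (Fin n) ℝ) (x : En n) : En n :=
  WithLp.toLp 2 (fun r => ∑ c, Q r c * x c)

/-- The matrix `Q_{ij}`: on the rows/columns of blocks `i` and `j` it is the orthogonal
projection onto `{s_{ij} : a_iᵀ s_i + a_jᵀ s_j = 0}`, and zero elsewhere. -/
def Qmat {n N : ℕ} (blk : Fin n → Fin N) (a : Fin n → ℝ) (i j : Fin N) :
    Matrix (Fin n) (Fin n) ℝ := fun r c =>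
  if (blk r = i ∨ blk r = j) ∧ (blk c = i ∨ blk c = j) then
    (if r = c then 1 else 0) -
      a r * a c / (∑ l ∈ Finset.univ.filter (fun l => blk l = i ∨ blk l = j), a l ^ 2)
  else 0

/- ## Auxiliary lemmas -/

lemma inner_En {n : ℕ} (x y : En n) : ⟪x, y⟫ = ∑ i, x i * y i := by
  simp [PiLp.inner_apply, RCLike.inner_apply, mul_comm]

lemma mvE_smulv {n : ℕ} (Q : Matrix (Fin n) (Fin n) ℝ) (c : ℝ) (y : En n) :
    mvE Q (c • y) = c • mvE Q y := by
  ext r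
  simp only [mvE, PiLp.toLp_apply, PiLp.smul_apply, smul_eq_mul, Finset.mul_sum]
  exact Finset.sum_congr rfl fun _ _ => by ring

lemma mvE_addv {n : ℕ} (Q : Matrix (Fin n) (Fin n) ℝ) (y z : En n) :
    mvE Q (y + z) = mvE Q y + mvE Q z := by
  ext r
  simp only [mvE, PiLp.toLp_apply, PiLp.add_apply, mul_add, Finset.sum_add_distrib]

lemma mvE_sumM {n : ℕ} {ι : Type*} (s : Finset ι) (M : ι → Matrix (Fin n) (Fin n) ℝ)
    (y : En n) : mvE (∑ q ∈ s, M q) y = ∑ q ∈ s, mvE (M q) y := by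
  ext r
  have h1 : (∑ q ∈ s, mvE (M q) y) r = ∑ q ∈ s, mvE (M q) y r :=
    by rw [WithLp.ofLp_sum, Finset.sum_apply]
  rw [h1]
  simp only [mvE, PiLp.toLp_apply, Matrix.sum_apply, Finset.sum_mul]
  exact Finset.sum_comm

lemma mvE_smulM {n : ℕ} (c : ℝ) (M : Matrix (Fin n) (Fin n) ℝ) (y : En n) :
    mvE (c • M) y = c • mvE M y := by
  ext r
  simp only [mvE, PiLp.toLp_apply, Matrix.smul_apply, smul_eq_mul, PiLp.smul_apply, Finset.mul_sum]
  exact Finset.sum_congr rfl fun _ _ => by ring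

lemma inner_mvE_symm {n : ℕ} (Q : Matrix (Fin n) (Fin n) ℝ)
    (hsym : ∀ r c, Q r c = Q c r) (x y : En n) : ⟪x, mvE Q y⟫ = ⟪mvE Q x, y⟫ := by
  simp only [inner_En, mvE, PiLp.toLp_apply, Finset.mul_sum, Finset.sum_mul]
  rw [Finset.sum_comm]
  exact Finset.sum_congr rfl fun c _ => Finset.sum_congr rfl fun r _ => by
    rw [hsym r c]; ring

lemma Qmat_symm {n N : ℕ} (blk : Fin n → Fin N) (a : Fin n → ℝ) (i j : Fin N)
    (r c : Fin n) : Qmat blk a i j r c = Qmat blk a i j c r := by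
  simp only [Qmat]
  split_ifs <;> first | ring1 | simp_all | tauto

lemma mvE_Qmat_a {n N : ℕ} (blk : Fin n → Fin N) (a : En n) (i j : Fin N) :
    mvE (Qmat blk (fun l => a l) i j) a = 0 := by
  ext r
  show (∑ c, Qmat blk (fun l => a l) i j r c * a c) = 0
  set B := Finset.univ.filter (fun l : Fin n => blk l = i ∨ blk l = j) with hB
  set S := ∑ l ∈ B, a l ^ 2 with hS
  by_cases hr : blk r = i ∨ blk r = j
  · have hstep : ∀ c, Qmat blk (fun l => a l) i j r c * a c =
        if (blk c = i ∨ blk c = j) then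
          ((if r = c then (1:ℝ) else 0) - a r * a c / S) * a c else 0 := by
      intro c
      simp only [Qmat]
      by_cases hc : blk c = i ∨ blk c = j
      · rw [if_pos ⟨hr, hc⟩, if_pos hc]
      · rw [if_neg (fun h' => hc h'.2), if_neg hc, zero_mul]
    rw [Finset.sum_congr rfl fun c _ => hstep c, ← Finset.sum_filter, ← hB]
    have hrB : r ∈ B := by simp [hB, hr]
    by_cases hS0 : S = 0
    · have hz : ∀ l ∈ B, a l = 0 := fun l hl => by
        have h2 := (Finset.sum_eq_zero_iff_of_nonneg
          (fun l (_ : l ∈ B) => sq_nonneg (a l))).mp (hS ▸ hS0) l hl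
        exact pow_eq_zero_iff two_ne_zero |>.mp h2
      exact Finset.sum_eq_zero fun c hc => by rw [hz c hc, mul_zero]
    · have key : ∑ c ∈ B, ((if r = c then (1:ℝ) else 0) - a r * a c / S) * a c
          = (∑ c ∈ B, (if r = c then a c else 0)) - (a r / S) * ∑ c ∈ B, a c ^ 2 := by
        rw [Finset.mul_sum, ← Finset.sum_sub_distrib]
        refine Finset.sum_congr rfl fun c _ => ?_
        by_cases h : r = c
        · simp only [if_pos h]; ring
        · simp only [if_neg h]; ring
      rw [key, Finset.sum_ite_eq B r (fun c => a c), if_pos hrB, ← hS,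
        div_mul_cancel₀ _ hS0, sub_self]
  · exact Finset.sum_eq_zero fun c _ => by
      simp only [Qmat]
      rw [if_neg (fun h' => hr h'.1), zero_mul]

lemma sum_snoc {P : Type*} [Fintype P] (k : ℕ) (F : (Fin (k+1) → P) → ℝ) :
    ∑ w : Fin (k+1) → P, F w = ∑ v : Fin k → P, ∑ q : P, F (Fin.snoc v q) := by
  rw [← (Fin.snocEquiv (fun _ => P)).sum_comp F, Fintype.sum_prod_type, Finset.sum_comm]
  rfl

lemma sum_prod_words {P : Type*} [Fintype P] (k : ℕ) (p : P → ℝ) (hp : ∑ q : P, p q = 1) :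
    ∑ w : Fin k → P, ∏ t, p (w t) = 1 := by
  induction k with
  | zero => simp
  | succ k ih =>
    rw [sum_snoc]
    have hsp : ∀ v : Fin k → P, ∀ q : P,
        (∏ t, p ((Fin.snoc v q : Fin (k+1) → P) t)) = (∏ t, p (v t)) * p q := by
      intro v q
      rw [Fin.prod_univ_castSucc]
      simp [Fin.snoc_castSucc, Fin.snoc_last]
    simp only [hsp]
    rw [← Finset.sum_mul_sum, ih, hp, one_mul]

/-- For the 2-random coordinate descent method with pair probabilities
`p_{ij}` applied to `min {f(x) : aᵀx = b}` with smooth `f` (`h = 0`), one step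
(`x⁺ = x − (1/L_{ij}) Q_{ij} ∇f(x)` with pair `(i,j)` drawn with probability `p_{ij}`)
satisfies `E[f(x⁺) | x] ≤ f(x) − (ν₂(Q)/2)‖∇f(x)_⊥‖²`, where `∇f(x)_⊥` is the orthogonal
projection of `∇f(x)` onto `S = {s : aᵀs = 0}`, `Q = ∑_{i<j} (p_{ij}/L_{ij}) Q_{ij}`, and
`ν₂(Q)` is the second smallest eigenvalue of `Q` (the minimum of the Rayleigh quotient of
`Q` over the unit sphere of `a^⊥`, which is positive since `0` is a simple eigenvalue of
`Q` with eigenvector `a`).  Consequently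
`min_{0 ≤ l ≤ k} E[‖∇f(x^l)_⊥‖²] ≤ 2 (f(x⁰) − f*)/(ν₂(Q)(k+1))`. -/
theorem stmt16 {n N : ℕ} (hN : 2 ≤ N) (blk : Fin n → Fin N)
    (f : En n → ℝ) (g : En n → En n) (hg : ∀ x, HasGradientAt f (g x) x)
    (L : Fin N → Fin N → ℝ) (hLpos : ∀ i j, 0 < L i j) (hLsym : ∀ i j, L i j = L j i)
    (hlip : ∀ (i j : Fin N), i ≠ j → ∀ (y s : En n),
      (∀ l, blk l ≠ i → blk l ≠ j → s l = 0) →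
      ‖(blockProj blk i (g (y + s)) + blockProj blk j (g (y + s))) -
        (blockProj blk i (g y) + blockProj blk j (g y))‖ ≤ L i j * ‖s‖)
    (a : En n) (ha : a ≠ 0) (b : ℝ)
    (p : Fin N → Fin N → ℝ) (hppos : ∀ i j, i ≠ j → 0 < p i j)
    (hpsym : ∀ i j, p i j = p j i)
    (hpsum : ∑ q ∈ Finset.univ.filter (fun q : Fin N × Fin N => q.1 < q.2),
      p q.1 q.2 = 1)
    (Q : Matrix (Fin n) (Fin n) ℝ)
    (hQ : Q = ∑ q ∈ Finset.univ.filter (fun q : Fin N × Fin N => q.1 < q.2),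
      (p q.1 q.2 / L q.1 q.2) • Qmat blk (fun l => a l) q.1 q.2)
    -- `ν₂(Q)` : the second smallest eigenvalue of `Q`, characterized as the minimum of
    -- the Rayleigh quotient of `Q` on the unit sphere of the subspace `S = a^⊥`
    (ν₂ : ℝ) (hν₂pos : 0 < ν₂)
    (hν₂ : IsGLB {r : ℝ | ∃ y : En n, ⟪a, y⟫ = 0 ∧ ‖y‖ = 1 ∧ r = ⟪y, mvE Q y⟫} ν₂)
    -- per-step decrease from the 2-block Lipschitz property
    (hdec : ∀ (x : En n) (i j : Fin N), i ≠ j →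
      f (x - (L i j)⁻¹ • mvE (Qmat blk (fun l => a l) i j) (g x)) ≤
        f x - (2 * L i j)⁻¹ * ⟪g x, mvE (Qmat blk (fun l => a l) i j) (g x)⟫)
    (fstar : ℝ) (hfstar : IsGLB (f '' {x : En n | ⟪a, x⟫ = b}) fstar)
    -- the trajectories along each realization of the random pairs
    (x0 : En n) (hx0 : ⟪a, x0⟫ = b)
    (X : (k : ℕ) → (Fin k → {q : Fin N × Fin N // q.1 < q.2}) → En n)
    (hX0 : ∀ w, X 0 w = x0)
    (hXs : ∀ k (w : Fin (k + 1) → {q : Fin N × Fin N // q.1 < q.2}),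
      X (k + 1) w = X k (fun t => w t.castSucc) -
        (L (w (Fin.last k)).1.1 (w (Fin.last k)).1.2)⁻¹ •
          mvE (Qmat blk (fun l => a l) (w (Fin.last k)).1.1 (w (Fin.last k)).1.2)
            (g (X k (fun t => w t.castSucc)))) :
    (∀ x : En n, ⟪a, x⟫ = b →
      ∑ q ∈ Finset.univ.filter (fun q : Fin N × Fin N => q.1 < q.2),
          p q.1 q.2 * f (x - (L q.1 q.2)⁻¹ • mvE (Qmat blk (fun l => a l) q.1 q.2) (g x)) ≤
        f x - ν₂ / 2 * ‖g x - (⟪a, g x⟫ / ‖a‖ ^ 2) • a‖ ^ 2) ∧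
    (∀ k : ℕ, ∃ l ≤ k,
      (∑ w : Fin l → {q : Fin N × Fin N // q.1 < q.2},
          (∏ t, p (w t).1.1 (w t).1.2) *
            ‖g (X l w) - (⟪a, g (X l w)⟫ / ‖a‖ ^ 2) • a‖ ^ 2) ≤
        2 * (f x0 - fstar) / (ν₂ * (k + 1))) := by
  have hna : ‖a‖ ≠ 0 := norm_ne_zero_iff.mpr ha
  have hQsym : ∀ r c, Q r c = Q c r := by
    intro r c
    rw [hQ]
    simp only [Matrix.sum_apply, Matrix.smul_apply, smul_eq_mul]
    exact Finset.sum_congr rfl fun q _ => by rw [Qmat_symm]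
  have hQa : mvE Q a = 0 := by
    rw [hQ, mvE_sumM]
    exact Finset.sum_eq_zero fun q _ => by rw [mvE_smulM, mvE_Qmat_a, smul_zero]
  have hinner_aQ : ∀ y, ⟪a, mvE Q y⟫ = 0 := fun y => by
    rw [inner_mvE_symm Q hQsym, hQa, inner_zero_left]
  have hinner_aQmat : ∀ (i j : Fin N) (y : En n),
      ⟪a, mvE (Qmat blk (fun l => a l) i j) y⟫ = 0 := fun i j y => by
    rw [inner_mvE_symm _ (Qmat_symm blk _ i j), mvE_Qmat_a, inner_zero_left]
  have hray : ∀ z : En n, ⟪a, z⟫ = 0 → ν₂ * ‖z‖ ^ 2 ≤ ⟪z, mvE Q z⟫ := by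
    intro z hz
    by_cases h0 : z = 0
    · subst h0
      have hz0 : (⟪(0 : En n), mvE Q 0⟫ : ℝ) = 0 := inner_zero_left _
      rw [hz0, norm_zero]
      norm_num
    · have hnz : ‖z‖ ≠ 0 := norm_ne_zero_iff.mpr h0
      have hle := hν₂.1 ⟨‖z‖⁻¹ • z,
        by rw [real_inner_smul_right, hz, mul_zero],
        by rw [norm_smul]; simp [abs_of_nonneg (inv_nonneg.mpr (norm_nonneg z)),
          inv_mul_cancel₀ hnz], rfl⟩
      rw [mvE_smulv, real_inner_smul_left, real_inner_smul_right] at hle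
      have h2 : (0:ℝ) < ‖z‖ ^ 2 := by positivity
      calc ν₂ * ‖z‖ ^ 2 ≤ (‖z‖⁻¹ * (‖z‖⁻¹ * ⟪z, mvE Q z⟫)) * ‖z‖ ^ 2 :=
            mul_le_mul_of_nonneg_right hle (le_of_lt h2)
        _ = ⟪z, mvE Q z⟫ := by
            rw [show (‖z‖⁻¹ * (‖z‖⁻¹ * ⟪z, mvE Q z⟫)) * ‖z‖ ^ 2
                = ⟪z, mvE Q z⟫ * (‖z‖ * ‖z‖⁻¹) ^ 2 from by ring,
              mul_inv_cancel₀ hnz, one_pow, mul_one]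
  have hperp : ∀ G : En n, ⟪a, G - (⟪a, G⟫ / ‖a‖ ^ 2) • a⟫ = 0 := by
    intro G
    rw [inner_sub_right, real_inner_smul_right, real_inner_self_eq_norm_sq,
      div_mul_cancel₀ _ (pow_ne_zero 2 hna), sub_self]
  have hsplit : ∀ G : En n,
      ⟪G, mvE Q G⟫ = ⟪G - (⟪a, G⟫ / ‖a‖ ^ 2) • a,
        mvE Q (G - (⟪a, G⟫ / ‖a‖ ^ 2) • a)⟫ := by
    intro G
    set α := ⟪a, G⟫ / ‖a‖ ^ 2 with hα
    have hG : G = (G - α • a) + α • a := by abel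
    conv_lhs => rw [hG]
    rw [mvE_addv, mvE_smulv, hQa, smul_zero, add_zero, inner_add_left,
      real_inner_smul_left, hinner_aQ, mul_zero, add_zero]
  have hQform : ∀ G : En n,
      ν₂ * ‖G - (⟪a, G⟫ / ‖a‖ ^ 2) • a‖ ^ 2 ≤ ⟪G, mvE Q G⟫ := fun G => by
    rw [hsplit G]; exact hray _ (hperp G)
  have part1 : ∀ x : En n,
      ∑ q ∈ Finset.univ.filter (fun q : Fin N × Fin N => q.1 < q.2),
          p q.1 q.2 * f (x - (L q.1 q.2)⁻¹ • mvE (Qmat blk (fun l => a l) q.1 q.2) (g x)) ≤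
        f x - ν₂ / 2 * ‖g x - (⟪a, g x⟫ / ‖a‖ ^ 2) • a‖ ^ 2 := by
    intro x
    have hQG : ⟪g x, mvE Q (g x)⟫ =
        ∑ q ∈ Finset.univ.filter (fun q : Fin N × Fin N => q.1 < q.2),
          (p q.1 q.2 / L q.1 q.2) *
            ⟪g x, mvE (Qmat blk (fun l => a l) q.1 q.2) (g x)⟫ := by
      rw [hQ, mvE_sumM, inner_sum]
      exact Finset.sum_congr rfl fun q _ => by rw [mvE_smulM, real_inner_smul_right]
    have h1 : ∀ q ∈ Finset.univ.filter (fun q : Fin N × Fin N => q.1 < q.2),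
        p q.1 q.2 * f (x - (L q.1 q.2)⁻¹ • mvE (Qmat blk (fun l => a l) q.1 q.2) (g x)) ≤
          p q.1 q.2 * (f x - (2 * L q.1 q.2)⁻¹ *
            ⟪g x, mvE (Qmat blk (fun l => a l) q.1 q.2) (g x)⟫) := by
      intro q hq
      have hne : q.1 ≠ q.2 := ne_of_lt (Finset.mem_filter.mp hq).2
      exact mul_le_mul_of_nonneg_left (hdec x q.1 q.2 hne) (le_of_lt (hppos _ _ hne))
    have h2 : ∑ q ∈ Finset.univ.filter (fun q : Fin N × Fin N => q.1 < q.2),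
        p q.1 q.2 * (f x - (2 * L q.1 q.2)⁻¹ *
          ⟪g x, mvE (Qmat blk (fun l => a l) q.1 q.2) (g x)⟫)
        = f x - 2⁻¹ * ⟪g x, mvE Q (g x)⟫ := by
      rw [hQG, Finset.mul_sum]
      simp only [mul_sub]
      rw [Finset.sum_sub_distrib, ← Finset.sum_mul, hpsum, one_mul]
      congr 1
      refine Finset.sum_congr rfl fun q hq => ?_
      have hL : L q.1 q.2 ≠ 0 := ne_of_gt (hLpos _ _)
      field_simp
      try ring
    calc ∑ q ∈ Finset.univ.filter (fun q : Fin N × Fin N => q.1 < q.2),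
        p q.1 q.2 * f (x - (L q.1 q.2)⁻¹ • mvE (Qmat blk (fun l => a l) q.1 q.2) (g x))
        ≤ f x - 2⁻¹ * ⟪g x, mvE Q (g x)⟫ := h2 ▸ Finset.sum_le_sum h1
      _ ≤ f x - ν₂ / 2 * ‖g x - (⟪a, g x⟫ / ‖a‖ ^ 2) • a‖ ^ 2 := by
          have := hQform (g x)
          linarith
  refine ⟨fun x _ => part1 x, ?_⟩
  have hsub : ∀ (F : Fin N × Fin N → ℝ),
      ∑ q ∈ Finset.univ.filter (fun q : Fin N × Fin N => q.1 < q.2), F q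
        = ∑ q : {q : Fin N × Fin N // q.1 < q.2}, F q.1 := fun F =>
    Finset.sum_subtype _ (by simp) F
  have hpP : ∑ q : {q : Fin N × Fin N // q.1 < q.2}, p q.1.1 q.1.2 = 1 := by
    rw [← hsub (fun q => p q.1 q.2)]; exact hpsum
  have hwone : ∀ l : ℕ, ∑ w : Fin l → {q : Fin N × Fin N // q.1 < q.2},
      ∏ t, p (w t).1.1 (w t).1.2 = 1 :=
    fun l => sum_prod_words l (fun q : {q : Fin N × Fin N // q.1 < q.2} =>
      p q.1.1 q.1.2) hpP
  have hwnn : ∀ {l : ℕ} (w : Fin l → {q : Fin N × Fin N // q.1 < q.2}),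
      0 ≤ ∏ t, p (w t).1.1 (w t).1.2 :=
    fun w => Finset.prod_nonneg fun t _ => le_of_lt (hppos _ _ (ne_of_lt (w t).2))
  have hfeas : ∀ l (w : Fin l → {q : Fin N × Fin N // q.1 < q.2}), ⟪a, X l w⟫ = b := by
    intro l
    induction l with
    | zero => intro w; rw [hX0]; exact hx0
    | succ l ih =>
      intro w
      rw [hXs l w, inner_sub_right, real_inner_smul_right, hinner_aQmat, mul_zero,
        sub_zero, ih]
  set Ef : ℕ → ℝ := fun l => ∑ w : Fin l → {q : Fin N × Fin N // q.1 < q.2},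
    (∏ t, p (w t).1.1 (w t).1.2) * f (X l w) with hEf
  set Gf : ℕ → ℝ := fun l => ∑ w : Fin l → {q : Fin N × Fin N // q.1 < q.2},
    (∏ t, p (w t).1.1 (w t).1.2) *
      ‖g (X l w) - (⟪a, g (X l w)⟫ / ‖a‖ ^ 2) • a‖ ^ 2 with hGf
  have hGfnn : ∀ l, 0 ≤ Gf l := fun l =>
    Finset.sum_nonneg fun w _ => mul_nonneg (hwnn w) (by positivity)
  have hE0 : Ef 0 = f x0 := by
    simp [hEf, hX0]
  have hElow : ∀ l, fstar ≤ Ef l := by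
    intro l
    have h1 : ∀ w : Fin l → {q : Fin N × Fin N // q.1 < q.2},
        (∏ t, p (w t).1.1 (w t).1.2) * fstar ≤
        (∏ t, p (w t).1.1 (w t).1.2) * f (X l w) := fun w =>
      mul_le_mul_of_nonneg_left (hfstar.1 ⟨X l w, hfeas l w, rfl⟩) (hwnn w)
    calc fstar = (∑ w : Fin l → {q : Fin N × Fin N // q.1 < q.2},
          ∏ t, p (w t).1.1 (w t).1.2) * fstar := by
          rw [hwone, one_mul]
      _ = ∑ w : Fin l → {q : Fin N × Fin N // q.1 < q.2},
          (∏ t, p (w t).1.1 (w t).1.2) * fstar := by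
          rw [Finset.sum_mul]
      _ ≤ Ef l := Finset.sum_le_sum fun w _ => h1 w
  have hstep : ∀ l, Ef (l + 1) ≤ Ef l - ν₂ / 2 * Gf l := by
    intro l
    have hE1 : Ef (l + 1) = ∑ v : Fin l → {q : Fin N × Fin N // q.1 < q.2},
        (∏ t, p (v t).1.1 (v t).1.2) *
        ∑ q : {q : Fin N × Fin N // q.1 < q.2}, p q.1.1 q.1.2 *
          f (X l v - (L q.1.1 q.1.2)⁻¹ •
            mvE (Qmat blk (fun l => a l) q.1.1 q.1.2) (g (X l v))) := by
      simp only [hEf]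
      rw [sum_snoc l (fun w => (∏ t, p (w t).1.1 (w t).1.2) * f (X (l+1) w))]
      refine Finset.sum_congr rfl fun v _ => ?_
      rw [Finset.mul_sum]
      refine Finset.sum_congr rfl fun q _ => ?_
      have hcast : (fun t : Fin l =>
          (Fin.snoc v q : Fin (l+1) → {q : Fin N × Fin N // q.1 < q.2}) t.castSucc) = v := by
        funext t; exact Fin.snoc_castSucc ..
      have hXval : X (l + 1) (Fin.snoc v q) = X l v - (L q.1.1 q.1.2)⁻¹ •
          mvE (Qmat blk (fun l => a l) q.1.1 q.1.2) (g (X l v)) := by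
        rw [hXs l (Fin.snoc v q), hcast, Fin.snoc_last]
      have hprod : (∏ t, p (((Fin.snoc v q : Fin (l+1) →
            {q : Fin N × Fin N // q.1 < q.2})) t).1.1
          (((Fin.snoc v q : Fin (l+1) → {q : Fin N × Fin N // q.1 < q.2})) t).1.2)
          = (∏ t, p (v t).1.1 (v t).1.2) * p q.1.1 q.1.2 := by
        rw [Fin.prod_univ_castSucc]
        simp [Fin.snoc_castSucc, Fin.snoc_last]
      rw [hXval, hprod]
      ring
    rw [hE1]
    have hbd : ∀ v : Fin l → {q : Fin N × Fin N // q.1 < q.2},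
        (∏ t, p (v t).1.1 (v t).1.2) *
        (∑ q : {q : Fin N × Fin N // q.1 < q.2}, p q.1.1 q.1.2 *
          f (X l v - (L q.1.1 q.1.2)⁻¹ •
            mvE (Qmat blk (fun l => a l) q.1.1 q.1.2) (g (X l v)))) ≤
        (∏ t, p (v t).1.1 (v t).1.2) *
          (f (X l v) - ν₂ / 2 * ‖g (X l v) - (⟪a, g (X l v)⟫ / ‖a‖ ^ 2) • a‖ ^ 2) := by
      intro v
      refine mul_le_mul_of_nonneg_left ?_ (hwnn v)
      have h := part1 (X l v)
      rw [hsub (fun q => p q.1 q.2 * f (X l v - (L q.1 q.2)⁻¹ •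
        mvE (Qmat blk (fun l => a l) q.1 q.2) (g (X l v))))] at h
      exact h
    calc ∑ v : Fin l → {q : Fin N × Fin N // q.1 < q.2},
        (∏ t, p (v t).1.1 (v t).1.2) *
        ∑ q : {q : Fin N × Fin N // q.1 < q.2}, p q.1.1 q.1.2 *
          f (X l v - (L q.1.1 q.1.2)⁻¹ •
            mvE (Qmat blk (fun l => a l) q.1.1 q.1.2) (g (X l v)))
        ≤ ∑ v : Fin l → {q : Fin N × Fin N // q.1 < q.2},
          (∏ t, p (v t).1.1 (v t).1.2) *
          (f (X l v) - ν₂ / 2 * ‖g (X l v) - (⟪a, g (X l v)⟫ / ‖a‖ ^ 2) • a‖ ^ 2) :=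
          Finset.sum_le_sum fun v _ => hbd v
      _ = Ef l - ν₂ / 2 * Gf l := by
          simp only [hEf, hGf]
          simp only [mul_sub]
          rw [Finset.sum_sub_distrib, Finset.mul_sum]
          congr 1
          exact Finset.sum_congr rfl fun v _ => by ring
  have htel : ∀ k : ℕ, ν₂ / 2 * (∑ l ∈ Finset.range (k + 1), Gf l) ≤ f x0 - fstar := by
    have haux : ∀ m : ℕ, ν₂ / 2 * (∑ l ∈ Finset.range m, Gf l) ≤ Ef 0 - Ef m := by
      intro m
      induction m with
      | zero => simp
      | succ m ih =>
        rw [Finset.sum_range_succ]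
        have := hstep m
        rw [mul_add]
        linarith
    intro k
    have h1 := haux (k + 1)
    have h2 := hElow (k + 1)
    rw [hE0] at h1
    linarith
  intro k
  obtain ⟨l, hl, hmin⟩ := Finset.exists_min_image (Finset.range (k + 1)) Gf
    ⟨0, Finset.mem_range.mpr (Nat.succ_pos k)⟩
  refine ⟨l, Nat.lt_succ_iff.mp (Finset.mem_range.mp hl), ?_⟩
  have hcard : ((k : ℝ) + 1) * Gf l ≤ ∑ l' ∈ Finset.range (k + 1), Gf l' := by
    have h1 : ∑ _l' ∈ Finset.range (k + 1), Gf l ≤ ∑ l' ∈ Finset.range (k + 1), Gf l' :=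
      Finset.sum_le_sum fun l' hl' => hmin l' hl'
    rw [Finset.sum_const, Finset.card_range, nsmul_eq_mul] at h1
    push_cast at h1 ⊢
    linarith
  have hbound := htel k
  have hpos : (0:ℝ) < ν₂ * ((k : ℝ) + 1) := by positivity
  rw [le_div_iff₀ hpos]
  have hGl := hGfnn l
  nlinarith [mul_le_mul_of_nonneg_left hcard (le_of_lt (half_pos hν₂pos))]
end
end
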